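/- Let ψ_0 = D φ_{E_0} where E_0 = {N-m, N-m+1, ..., N}. Then ψ_0 ∈ ker D and ω_i ψ_0 = t^{c(i)} ψ_0 for 1 ≤ i ≤ N, where c(i) = N - m - i for 1 ≤ i ≤ N - m - 1 and c(i) = i - N for N - m ≤ i ≤ N. -/

import Mathlib

open Finset

noncomputable section

/-- The space of "fermionic" polynomials: formal linear combinations of
monomials `φ_E = θ_{i₁}⋯θ_{i_m}` indexed by finite sets `E` of indices. -/
abbrev SP (K : Type) [Field K] := Finset ℕ →₀ K

variable {K : Type} [Field K]

/-- basis monomial φ_E -/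
def phi (K : Type) [Field K] (E : Finset ℕ) : SP K := Finsupp.single E 1

/-- linear operator determined by its values on the basis {φ_E} -/
def opOf (v : Finset ℕ → SP K) : SP K →ₗ[K] SP K :=
  Finsupp.lsum K fun E => LinearMap.toSpanSingleton K (SP K) (v E)

/-- the image s_i E of E under the transposition swapping i, i+1 -/
def swapSet (i : ℕ) (E : Finset ℕ) : Finset ℕ := E.image (Equiv.swap i (i + 1))

/-- the Hecke algebra operator T_i acting on anti-commuting variables -/
def heckeT (t : K) (i : ℕ) : SP K →ₗ[K] SP K :=
  opOf fun E =>
    if i ∈ E then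
      (if i + 1 ∈ E then -phi K E else phi K (swapSet i E))
    else
      (if i + 1 ∈ E then (t - 1) • phi K E + t • phi K (swapSet i E)
       else t • phi K E)

/-- signed exterior multiplication θ̂_i -/
def thetaHat (K : Type) [Field K] (i : ℕ) : SP K →ₗ[K] SP K :=
  opOf fun E =>
    if i ∈ E then 0
    else ((-1 : K) ^ (E.filter (· < i)).card) • phi K (insert i E)

/-- formal fermionic derivative ∂_i -/
def fermD (K : Type) [Field K] (i : ℕ) : SP K →ₗ[K] SP K :=
  opOf fun E =>
    if i ∈ E then ((-1 : K) ^ (E.filter (· < i)).card) • phi K (E.erase i)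
    else 0

/-- M = Σ_{i=1}^N θ̂_i -/
def opM (K : Type) [Field K] (N : ℕ) : SP K →ₗ[K] SP K :=
  ∑ i ∈ Finset.Icc 1 N, thetaHat K i

/-- D = Σ_{i=1}^N t^{i-1} ∂_i -/
def opD (t : K) (N : ℕ) : SP K →ₗ[K] SP K :=
  ∑ i ∈ Finset.Icc 1 N, t ^ (i - 1) • fermD K i

/-- auxiliary recursion for the Jucys–Murphy operators (first arg = fuel) -/
def omegaAux (t : K) : ℕ → ℕ → SP K →ₗ[K] SP K
  | 0, _ => LinearMap.id
  | k + 1, i => t⁻¹ • (heckeT t i ∘ₗ omegaAux t k (i + 1) ∘ₗ heckeT t i)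

/-- Jucys–Murphy operator ω_i = t^{i-N} T_i ⋯ T_{N-1} T_{N-1} ⋯ T_i  (ω_N = 1),
via the recursion ω_N = 1, ω_i = t⁻¹ T_i ω_{i+1} T_i. -/
def omega (t : K) (N i : ℕ) : SP K →ₗ[K] SP K := omegaAux t (N - i) i

-- basic lemmas
section Basics
variable {K : Type} [Field K]

theorem opOf_phi (v : Finset ℕ → SP K) (E : Finset ℕ) : opOf v (phi K E) = v E := by
  simp [opOf, phi]

theorem lhom_ext' {f g : SP K →ₗ[K] SP K} (h : ∀ E, f (phi K E) = g (phi K E)) : f = g := by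
  apply Finsupp.lhom_ext
  intro a b
  have : (Finsupp.single a b : SP K) = b • phi K a := by simp [phi]
  rw [this, map_smul, map_smul, h]

theorem mem_swapSet {i x : ℕ} {E : Finset ℕ} :
    x ∈ swapSet i E ↔ Equiv.swap i (i+1) x ∈ E := by
  constructor
  · rintro hx
    simp only [swapSet, Finset.mem_image] at hx
    obtain ⟨y, hy, rfl⟩ := hx
    simpa using hy
  · intro hx
    simp only [swapSet, Finset.mem_image]
    exact ⟨_, hx, by simp⟩

theorem heckeT_phi_both {t : K} {i : ℕ} {E : Finset ℕ} (h1 : i ∈ E) (h2 : i+1 ∈ E) :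
    heckeT t i (phi K E) = -phi K E := by
  rw [heckeT, opOf_phi, if_pos h1, if_pos h2]

theorem heckeT_phi_none {t : K} {i : ℕ} {E : Finset ℕ} (h1 : i ∉ E) (h2 : i+1 ∉ E) :
    heckeT t i (phi K E) = t • phi K E := by
  rw [heckeT, opOf_phi, if_neg h1, if_neg h2]

theorem heckeT_phi_lower {t : K} {i : ℕ} {E : Finset ℕ} (h1 : i ∈ E) (h2 : i+1 ∉ E) :
    heckeT t i (phi K E) = phi K (swapSet i E) := by
  rw [heckeT, opOf_phi, if_pos h1, if_neg h2]

theorem heckeT_phi_raise {t : K} {i : ℕ} {E : Finset ℕ} (h1 : i ∉ E) (h2 : i+1 ∈ E) :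
    heckeT t i (phi K E) = (t-1) • phi K E + t • phi K (swapSet i E) := by
  rw [heckeT, opOf_phi, if_neg h1, if_pos h2]

theorem fermD_phi_mem {i : ℕ} {E : Finset ℕ} (h : i ∈ E) :
    fermD K i (phi K E) = ((-1 : K) ^ (E.filter (· < i)).card) • phi K (E.erase i) := by
  rw [fermD, opOf_phi, if_pos h]

theorem fermD_phi_not_mem {i : ℕ} {E : Finset ℕ} (h : i ∉ E) :
    fermD K i (phi K E) = 0 := by
  rw [fermD, opOf_phi, if_neg h]

end Basics
section SetLemmas
variable {K : Type} [Field K]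

theorem swap_mem_self {i x : ℕ} {E : Finset ℕ} (h : x ≠ i) (h' : x ≠ i+1) :
    x ∈ swapSet i E ↔ x ∈ E := by
  rw [mem_swapSet, Equiv.swap_apply_of_ne_of_ne h h']

theorem swap_mem_left {i : ℕ} {E : Finset ℕ} : i ∈ swapSet i E ↔ i+1 ∈ E := by
  rw [mem_swapSet, Equiv.swap_apply_left]

theorem swap_mem_right {i : ℕ} {E : Finset ℕ} : i+1 ∈ swapSet i E ↔ i ∈ E := by
  rw [mem_swapSet, Equiv.swap_apply_right]

theorem swapSet_erase {i k : ℕ} (E : Finset ℕ) (h1 : k ≠ i) (h2 : k ≠ i+1) :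
    swapSet i (E.erase k) = (swapSet i E).erase k := by
  ext x
  simp only [mem_swapSet, Finset.mem_erase, Equiv.swap_apply_def]
  split_ifs with ha hb <;> subst_eqs <;> simp_all <;> omega

theorem swapSet_erase_self {i : ℕ} {E : Finset ℕ} (h1 : i ∈ E) (h2 : i+1 ∈ E) :
    swapSet i (E.erase i) = E.erase (i+1) := by
  ext x
  simp only [mem_swapSet, Finset.mem_erase, Equiv.swap_apply_def]
  split_ifs with ha hb <;> subst_eqs <;> simp_all <;> omega

theorem erase_swapSet_left {i : ℕ} {E : Finset ℕ} (h1 : i ∉ E) :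
    (swapSet i E).erase i = E.erase (i+1) := by
  ext x
  simp only [mem_swapSet, Finset.mem_erase, Equiv.swap_apply_def]
  split_ifs with ha hb <;> subst_eqs <;> simp_all <;> omega

theorem erase_swapSet_right {i : ℕ} {E : Finset ℕ} (h1 : i+1 ∉ E) :
    (swapSet i E).erase (i+1) = E.erase i := by
  ext x
  simp only [mem_swapSet, Finset.mem_erase, Equiv.swap_apply_def]
  split_ifs with ha hb <;> subst_eqs <;> simp_all <;> omega

theorem filter_swapSet {i k : ℕ} (E : Finset ℕ) (h1 : k ≠ i) (h2 : k ≠ i+1) :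
    (swapSet i E).filter (· < k) = swapSet i (E.filter (· < k)) := by
  ext x
  simp only [mem_swapSet, Finset.mem_filter, Equiv.swap_apply_def]
  split_ifs with ha hb <;> subst_eqs <;> simp_all <;> omega

theorem card_filter_swapSet {i k : ℕ} (E : Finset ℕ) (h1 : k ≠ i) (h2 : k ≠ i+1) :
    ((swapSet i E).filter (· < k)).card = (E.filter (· < k)).card := by
  rw [filter_swapSet E h1 h2, swapSet, Finset.card_image_of_injective _ (Equiv.injective _)]

theorem filter_swapSet_self {i : ℕ} (E : Finset ℕ) :
    (swapSet i E).filter (· < i) = E.filter (· < i) := by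
  ext x
  simp only [mem_swapSet, Finset.mem_filter, Equiv.swap_apply_def]
  split_ifs with ha hb <;> subst_eqs <;> simp_all <;> omega

theorem filter_succ_of_mem {i : ℕ} {E : Finset ℕ} (h : i ∈ E) :
    E.filter (· < i+1) = insert i (E.filter (· < i)) := by
  ext x
  simp only [Finset.mem_filter, Finset.mem_insert]
  constructor
  · rintro ⟨hx, hlt⟩
    rcases Nat.lt_succ_iff_lt_or_eq.mp hlt with h' | rfl
    · exact Or.inr ⟨hx, h'⟩
    · exact Or.inl rfl
  · rintro (rfl | ⟨hx, hlt⟩)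
    · exact ⟨h, Nat.lt_succ_self _⟩
    · exact ⟨hx, Nat.lt_succ_of_lt hlt⟩

theorem filter_succ_of_not_mem {i : ℕ} {E : Finset ℕ} (h : i ∉ E) :
    E.filter (· < i+1) = E.filter (· < i) := by
  ext x
  simp only [Finset.mem_filter]
  constructor
  · rintro ⟨hx, hlt⟩
    refine ⟨hx, ?_⟩
    rcases Nat.lt_succ_iff_lt_or_eq.mp hlt with h' | rfl
    · exact h'
    · exact absurd hx h
  · rintro ⟨hx, hlt⟩
    exact ⟨hx, Nat.lt_succ_of_lt hlt⟩

theorem card_filter_succ_of_mem {i : ℕ} {E : Finset ℕ} (h : i ∈ E) :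
    (E.filter (· < i+1)).card = (E.filter (· < i)).card + 1 := by
  rw [filter_succ_of_mem h, Finset.card_insert_of_notMem (by simp)]

theorem filter_erase_ge {j i : ℕ} (E : Finset ℕ) (h : i ≤ j) :
    (E.erase j).filter (· < i) = E.filter (· < i) := by
  ext x
  simp only [Finset.mem_filter, Finset.mem_erase]
  constructor
  · rintro ⟨⟨_, hx⟩, hlt⟩; exact ⟨hx, hlt⟩
  · rintro ⟨hx, hlt⟩; exact ⟨⟨by omega, hx⟩, hlt⟩

theorem filter_erase_succ {i : ℕ} (E : Finset ℕ) :
    (E.erase i).filter (· < i+1) = E.filter (· < i) := by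
  ext x
  simp only [Finset.mem_filter, Finset.mem_erase]
  constructor
  · rintro ⟨⟨hne, hx⟩, hlt⟩; exact ⟨hx, by omega⟩
  · rintro ⟨hx, hlt⟩; exact ⟨⟨by omega, hx⟩, by omega⟩

theorem card_filter_erase_lt {i j : ℕ} {E : Finset ℕ} (hi : i ∈ E) (h : i < j) :
    ((E.erase i).filter (· < j)).card + 1 = (E.filter (· < j)).card := by
  have : E.filter (· < j) = insert i ((E.erase i).filter (· < j)) := by
    ext x
    simp only [Finset.mem_filter, Finset.mem_insert, Finset.mem_erase]
    constructor
    · rintro ⟨hx, hlt⟩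
      by_cases hxi : x = i
      · exact Or.inl hxi
      · exact Or.inr ⟨⟨hxi, hx⟩, hlt⟩
    · rintro (rfl | ⟨⟨_, hx⟩, hlt⟩)
      · exact ⟨hi, h⟩
      · exact ⟨hx, hlt⟩
  rw [this, Finset.card_insert_of_notMem (by simp)]

end SetLemmas
section DD
variable {K : Type} [Field K]

theorem fermD_fermD_self (i : ℕ) (E : Finset ℕ) :
    fermD K i (fermD K i (phi K E)) = 0 := by
  by_cases h : i ∈ E
  · rw [fermD_phi_mem h, map_smul, fermD_phi_not_mem (Finset.notMem_erase i E), smul_zero]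
  · rw [fermD_phi_not_mem h, map_zero]

theorem fermD_anticomm_lt {i j : ℕ} (hij : i < j) (E : Finset ℕ) :
    fermD K i (fermD K j (phi K E)) + fermD K j (fermD K i (phi K E)) = 0 := by
  by_cases hj : j ∈ E
  · by_cases hi : i ∈ E
    · rw [fermD_phi_mem hj, fermD_phi_mem hi, map_smul, map_smul,
        fermD_phi_mem (Finset.mem_erase.mpr ⟨by omega, hi⟩),
        fermD_phi_mem (Finset.mem_erase.mpr ⟨by omega, hj⟩)]
      rw [filter_erase_ge E (le_of_lt hij)]
      have hcard := card_filter_erase_lt hi hij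
      set d := ((E.erase i).filter (· < j)).card with hd
      rw [← hcard]
      rw [Finset.erase_right_comm (a := j) (b := i)]
      rw [smul_smul, smul_smul, ← add_smul]
      convert zero_smul K _
      ring
    · rw [fermD_phi_mem hj, map_smul,
        fermD_phi_not_mem (fun hc => hi (Finset.mem_of_mem_erase hc)),
        fermD_phi_not_mem hi, map_zero, smul_zero, add_zero]
  · rw [fermD_phi_not_mem hj, map_zero, zero_add]
    by_cases hi : i ∈ E
    · rw [fermD_phi_mem hi, map_smul,
        fermD_phi_not_mem (fun hc => hj (Finset.mem_of_mem_erase hc)), smul_zero]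
    · rw [fermD_phi_not_mem hi, map_zero]

theorem fermD_anticomm (i j : ℕ) (E : Finset ℕ) :
    fermD K i (fermD K j (phi K E)) + fermD K j (fermD K i (phi K E)) = 0 := by
  rcases lt_trichotomy i j with h | rfl | h
  · exact fermD_anticomm_lt h E
  · rw [fermD_fermD_self, zero_add]
  · rw [add_comm]; exact fermD_anticomm_lt h E

theorem opD_phi_expand (t : K) (N : ℕ) (x : SP K) :
    opD t N x = ∑ k ∈ Finset.Icc 1 N, t ^ (k-1) • fermD K k x := by
  rw [opD, LinearMap.sum_apply]
  simp [LinearMap.smul_apply]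

theorem opD_opD (t : K) (N : ℕ) : opD t N ∘ₗ opD t N = 0 := by
  apply lhom_ext'
  intro E
  rw [LinearMap.comp_apply, LinearMap.zero_apply, opD_phi_expand t N (phi K E), map_sum]
  have : ∀ k ∈ Finset.Icc 1 N, opD t N (t ^ (k-1) • fermD K k (phi K E)) =
      ∑ l ∈ Finset.Icc 1 N, (t ^ (l-1) * t ^ (k-1)) • fermD K l (fermD K k (phi K E)) := by
    intro k _
    rw [map_smul, opD_phi_expand t N (fermD K k (phi K E)), Finset.smul_sum]
    refine Finset.sum_congr rfl fun l _ => ?_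
    rw [smul_smul, mul_comm]
  rw [Finset.sum_congr rfl this, ← Finset.sum_product']
  refine Finset.sum_involution (fun p _ => (p.2, p.1)) ?_ ?_ ?_ ?_
  · intro p _
    rw [mul_comm, ← smul_add, fermD_anticomm, smul_zero]
  · intro p _ h hc
    apply h
    have h2 : p.2 = p.1 := congrArg Prod.fst hc
    rw [h2, fermD_fermD_self, smul_zero]
  · intro p hp
    simp only [Finset.mem_product] at hp ⊢
    exact ⟨hp.2, hp.1⟩
  · intro p _
    rfl
section Comm
variable {K : Type} [Field K]

theorem swapSet_erase_self' {i : ℕ} {E : Finset ℕ} (h1 : i ∈ E) (h2 : i+1 ∈ E) :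
    swapSet i (E.erase (i+1)) = E.erase i := by
  ext x
  simp only [mem_swapSet, Finset.mem_erase, Equiv.swap_apply_def]
  split_ifs with ha hb <;> subst_eqs <;> simp_all <;> omega

theorem heckeT_fermD_comm {i k : ℕ} (t : K) (h1 : k ≠ i) (h2 : k ≠ i+1) :
    heckeT t i ∘ₗ fermD K k = fermD K k ∘ₗ heckeT t i := by
  apply lhom_ext'; intro E
  simp only [LinearMap.comp_apply]
  by_cases hk : k ∈ E
  case neg =>
    rw [fermD_phi_not_mem hk, map_zero]
    by_cases hi : i ∈ E <;> by_cases hi1 : i+1 ∈ E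
    · rw [heckeT_phi_both hi hi1, map_neg, fermD_phi_not_mem hk, neg_zero]
    · rw [heckeT_phi_lower hi hi1,
        fermD_phi_not_mem (fun hc => hk ((swap_mem_self h1 h2).mp hc))]
    · rw [heckeT_phi_raise hi hi1, map_add, map_smul, map_smul, fermD_phi_not_mem hk,
        fermD_phi_not_mem (fun hc => hk ((swap_mem_self h1 h2).mp hc)),
        smul_zero, smul_zero, add_zero]
    · rw [heckeT_phi_none hi hi1, map_smul, fermD_phi_not_mem hk, smul_zero]
  case pos =>
    have hik : ∀ j, j ≠ k → (j ∈ E.erase k ↔ j ∈ E) :=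
      fun j hj => ⟨Finset.mem_of_mem_erase, fun h => Finset.mem_erase.mpr ⟨hj, h⟩⟩
    have hk' : k ∈ swapSet i E := (swap_mem_self h1 h2).mpr hk
    rw [fermD_phi_mem hk, map_smul]
    by_cases hi : i ∈ E <;> by_cases hi1 : i+1 ∈ E
    · rw [heckeT_phi_both ((hik i h1.symm).mpr hi) ((hik (i+1) h2.symm).mpr hi1),
        heckeT_phi_both hi hi1, map_neg, fermD_phi_mem hk, smul_neg]
    · rw [heckeT_phi_lower ((hik i h1.symm).mpr hi)
          (fun hc => hi1 ((hik (i+1) h2.symm).mp hc)),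
        heckeT_phi_lower hi hi1, fermD_phi_mem hk',
        card_filter_swapSet E h1 h2, swapSet_erase E h1 h2]
    · rw [heckeT_phi_raise (fun hc => hi ((hik i h1.symm).mp hc))
          ((hik (i+1) h2.symm).mpr hi1),
        heckeT_phi_raise hi hi1, map_add, map_smul, map_smul, fermD_phi_mem hk,
        fermD_phi_mem hk', card_filter_swapSet E h1 h2, swapSet_erase E h1 h2,
        smul_add, smul_smul, smul_smul, smul_smul, smul_smul, mul_comm]
      congr 1
      rw [mul_comm]
    · rw [heckeT_phi_none (fun hc => hi ((hik i h1.symm).mp hc))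
          (fun hc => hi1 ((hik (i+1) h2.symm).mp hc)),
        heckeT_phi_none hi hi1, map_smul, fermD_phi_mem hk,
        smul_smul, smul_smul, mul_comm]
end Comm
section CommP
variable {K : Type} [Field K]

theorem heckeT_P_comm {i : ℕ} (t : K) (hi : 1 ≤ i) :
    heckeT t i ∘ₗ (t^(i-1) • fermD K i + t^i • fermD K (i+1)) =
    (t^(i-1) • fermD K i + t^i • fermD K (i+1)) ∘ₗ heckeT t i := by
  have hpow : t^(i-1) * t = t^i := by
    conv_rhs => rw [← Nat.sub_add_cancel hi]
    rw [pow_succ]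
  apply lhom_ext'; intro E
  simp only [LinearMap.comp_apply, LinearMap.add_apply, LinearMap.smul_apply]
  by_cases hmi : i ∈ E <;> by_cases hmi1 : i+1 ∈ E
  · rw [fermD_phi_mem hmi, fermD_phi_mem hmi1, heckeT_phi_both hmi hmi1]
    simp only [map_add, map_smul, map_neg, map_zero, smul_zero, zero_add, add_zero, smul_neg]
    rw [heckeT_phi_raise (Finset.notMem_erase i E) (Finset.mem_erase.mpr ⟨by omega, hmi1⟩),
      heckeT_phi_lower (Finset.mem_erase.mpr ⟨by omega, hmi⟩) (Finset.notMem_erase (i+1) E),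
      swapSet_erase_self hmi hmi1, swapSet_erase_self' hmi hmi1,
      fermD_phi_mem hmi, fermD_phi_mem hmi1, card_filter_succ_of_mem hmi]
    simp only [← hpow]
    module
  · rw [fermD_phi_mem hmi, fermD_phi_not_mem hmi1, heckeT_phi_lower hmi hmi1]
    simp only [map_add, map_smul, map_neg, map_zero, smul_zero, zero_add, add_zero, smul_neg]
    rw [heckeT_phi_none (Finset.notMem_erase i E) (fun hc => hmi1 (Finset.mem_of_mem_erase hc)),
      fermD_phi_not_mem (fun hc => hmi1 (swap_mem_left.mp hc)),
      fermD_phi_mem (swap_mem_right.mpr hmi),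
      erase_swapSet_right hmi1, filter_succ_of_not_mem (fun hc => hmi1 (swap_mem_left.mp hc)),
      filter_swapSet_self]
    simp only [← hpow, smul_zero, add_zero, zero_add]
    module
  · rw [fermD_phi_not_mem hmi, fermD_phi_mem hmi1, heckeT_phi_raise hmi hmi1]
    simp only [map_add, map_smul, map_neg, map_zero, smul_zero, zero_add, add_zero, smul_neg]
    rw [heckeT_phi_none (fun hc => hmi (Finset.mem_of_mem_erase hc))
        (Finset.notMem_erase (i+1) E),
      fermD_phi_not_mem hmi, fermD_phi_mem hmi1,
      fermD_phi_mem (swap_mem_left.mpr hmi1),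
      fermD_phi_not_mem (fun hc => hmi (swap_mem_right.mp hc)),
      erase_swapSet_left hmi, filter_swapSet_self, filter_succ_of_not_mem hmi]
    simp only [← hpow, smul_zero, add_zero, zero_add]
    module
  · rw [fermD_phi_not_mem hmi, fermD_phi_not_mem hmi1, heckeT_phi_none hmi hmi1]
    simp only [map_smul, map_zero, smul_zero, add_zero,
      fermD_phi_not_mem hmi, fermD_phi_not_mem hmi1]

end CommP
section CommD
variable {K : Type} [Field K]

theorem heckeT_opD_comm {i N : ℕ} (t : K) (h1 : 1 ≤ i) (h2 : i+1 ≤ N) :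
    heckeT t i ∘ₗ opD t N = opD t N ∘ₗ heckeT t i := by
  have hmem : i ∈ Finset.Icc 1 N := by simp; omega
  have hmem1 : i+1 ∈ (Finset.Icc 1 N).erase i := by
    simp only [Finset.mem_erase, Finset.mem_Icc]; omega
  have hsplit : opD t N = (t^(i-1) • fermD K i + t^i • fermD K (i+1)) +
      ∑ k ∈ ((Finset.Icc 1 N).erase i).erase (i+1), t^(k-1) • fermD K k := by
    rw [opD, ← Finset.add_sum_erase _ _ hmem, ← Finset.add_sum_erase _ _ hmem1, ← add_assoc]
    norm_num
  rw [hsplit]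
  apply LinearMap.ext; intro x
  simp only [LinearMap.comp_apply, LinearMap.add_apply, LinearMap.sum_apply]
  rw [map_add, map_sum]
  congr 1
  · have := LinearMap.congr_fun (heckeT_P_comm t h1) x
    simpa only [LinearMap.comp_apply, LinearMap.add_apply] using this
  · refine Finset.sum_congr rfl fun k hk => ?_
    simp only [Finset.mem_erase] at hk
    rw [LinearMap.smul_apply, LinearMap.smul_apply, map_smul]
    congr 1
    exact LinearMap.congr_fun (heckeT_fermD_comm t hk.2.1 hk.1) x

theorem omegaAux_opD_comm {N : ℕ} (t : K) :
    ∀ d i, 1 ≤ i → i + d ≤ N →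
    omegaAux t d i ∘ₗ opD t N = opD t N ∘ₗ omegaAux t d i := by
  intro d
  induction d with
  | zero => intro i _ _; simp [omegaAux]
  | succ d ih =>
    intro i hi hiN
    have hT := heckeT_opD_comm (i := i) (N := N) t hi (by omega)
    have hom := ih (i+1) (by omega) (by omega)
    rw [show omegaAux t (d+1) i = t⁻¹ • (heckeT t i ∘ₗ omegaAux t d (i + 1) ∘ₗ heckeT t i)
      from rfl]
    rw [LinearMap.smul_comp, LinearMap.comp_smul]
    have hom' : ∀ y, omegaAux t d (i+1) (opD t N y) = opD t N (omegaAux t d (i+1) y) :=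
      fun y => by simpa using LinearMap.congr_fun hom y
    have hT' : ∀ y, heckeT t i (opD t N y) = opD t N (heckeT t i y) :=
      fun y => by simpa using LinearMap.congr_fun hT y
    congr 1
    apply LinearMap.ext; intro x
    simp only [LinearMap.comp_apply]
    rw [hT' x, hom', hT']

end CommD
section Eigen
variable {K : Type} [Field K]

theorem omegaAux_interval (t : K) (ht : t ≠ 0) :
    ∀ (d k : ℕ) (E : Finset ℕ), Finset.Icc k (k+d) ⊆ E →
    omegaAux t d k (phi K E) = (t ^ (-(d:ℤ))) • phi K E := by
  intro d
  induction d with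
  | zero => intro k E _; simp [omegaAux]
  | succ d ih =>
    intro k E hE
    have hk : k ∈ E := hE (by simp)
    have hk1 : k+1 ∈ E := hE (by simp)
    have hsub : Finset.Icc (k+1) (k+1+d) ⊆ E := by
      intro x hx
      apply hE
      simp only [Finset.mem_Icc] at hx ⊢
      omega
    show (t⁻¹ • (heckeT t k ∘ₗ omegaAux t d (k + 1) ∘ₗ heckeT t k)) (phi K E) = _
    rw [LinearMap.smul_apply, LinearMap.comp_apply, LinearMap.comp_apply,
      heckeT_phi_both hk hk1, map_neg, ih (k+1) E hsub]
    simp only [smul_neg, map_neg, map_smul, heckeT_phi_both hk hk1, neg_neg, smul_smul]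
    congr 1
    rw [← zpow_neg_one t, ← zpow_add₀ ht]
    congr 1
    push_cast
    ring
end Eigen
section EigenB
variable {K : Type} [Field K]

set_option maxHeartbeats 1000000 in
theorem omegaAux_B (t : K) (ht : t ≠ 0) (b N : ℕ) :
    ∀ (d k : ℕ), b ≤ k → k + d = N →
    omegaAux t d k (phi K ((Finset.Icc b N).erase k)) =
      (t - (t-1) * t^((k:ℤ) - N)) • phi K ((Finset.Icc b N).erase k) +
      ∑ j ∈ Finset.Icc (k+1) N, (((-1:K))^(j-k-1) * (t-1) * t^((j:ℤ) - N)) •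
        phi K ((Finset.Icc b N).erase j) := by
  intro d
  induction d with
  | zero =>
    intro k hbk hkN
    have hk : k = N := by omega
    subst hk
    rw [Finset.Icc_eq_empty (show ¬ k+1 ≤ k by omega), Finset.sum_empty, add_zero,
      show ((k:ℤ) - k) = 0 by ring, zpow_zero, mul_one,
      show t - (t-1) = 1 by ring, one_smul]
    rfl
  | succ d ih =>
    intro k hbk hkN
    have hkN1 : k+1 ≤ N := by omega
    have hmem_k : k ∈ Finset.Icc b N := Finset.mem_Icc.mpr ⟨hbk, by omega⟩
    have hk_not : k ∉ (Finset.Icc b N).erase k := Finset.notMem_erase k _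
    have hk1_mem : k+1 ∈ (Finset.Icc b N).erase k :=
      Finset.mem_erase.mpr ⟨by omega, Finset.mem_Icc.mpr ⟨by omega, hkN1⟩⟩
    have hk_mem' : k ∈ (Finset.Icc b N).erase (k+1) := Finset.mem_erase.mpr ⟨by omega, hmem_k⟩
    have hk1_not : k+1 ∉ (Finset.Icc b N).erase (k+1) := Finset.notMem_erase _ _
    have hswap1 : swapSet k ((Finset.Icc b N).erase k) = (Finset.Icc b N).erase (k+1) := by
      ext x
      simp only [mem_swapSet, Finset.mem_erase, Finset.mem_Icc, Equiv.swap_apply_def]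
      split_ifs <;> subst_eqs <;> simp_all <;> omega
    have hswap2 : swapSet k ((Finset.Icc b N).erase (k+1)) = (Finset.Icc b N).erase k := by
      ext x
      simp only [mem_swapSet, Finset.mem_erase, Finset.mem_Icc, Equiv.swap_apply_def]
      split_ifs <;> subst_eqs <;> simp_all <;> omega
    have hTk : heckeT t k (phi K ((Finset.Icc b N).erase k)) =
        (t-1) • phi K ((Finset.Icc b N).erase k) + t • phi K ((Finset.Icc b N).erase (k+1)) := by
      rw [heckeT_phi_raise hk_not hk1_mem, hswap1]
    have hTk2 : heckeT t k (phi K ((Finset.Icc b N).erase (k+1))) =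
        phi K ((Finset.Icc b N).erase k) := by
      rw [heckeT_phi_lower hk_mem' hk1_not, hswap2]
    have hL1 : omegaAux t d (k+1) (phi K ((Finset.Icc b N).erase k)) =
        (t ^ (-(d:ℤ))) • phi K ((Finset.Icc b N).erase k) := by
      apply omegaAux_interval t ht
      intro x hx
      simp only [Finset.mem_Icc] at hx
      exact Finset.mem_erase.mpr ⟨by omega, Finset.mem_Icc.mpr ⟨by omega, by omega⟩⟩
    have hIH := ih (k+1) (by omega) (by omega)
    show (t⁻¹ • (heckeT t k ∘ₗ omegaAux t d (k + 1) ∘ₗ heckeT t k))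
        (phi K ((Finset.Icc b N).erase k)) = _
    rw [LinearMap.smul_apply, LinearMap.comp_apply, LinearMap.comp_apply, hTk,
      map_add, map_smul, map_smul, hL1, hIH]
    simp only [map_add, map_smul, map_sum]
    rw [hTk, hTk2]
    have he1 : (k:ℤ) - N = -(d:ℤ) - 1 := by push_cast; omega
    have he2 : ((k+1 : ℕ) : ℤ) - (N:ℤ) = -(d:ℤ) := by push_cast; omega
    have hins : Finset.Icc (k+1) N = insert (k+1) (Finset.Icc (k+1+1) N) := by
      ext x; simp only [Finset.mem_Icc, Finset.mem_insert]; omega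
    rw [hins, Finset.sum_insert (by simp [Finset.mem_Icc])]
    have hterm : ∀ j ∈ Finset.Icc (k+1+1) N,
        (((-1:K))^(j-(k+1)-1) * (t-1) * t^((j:ℤ) - N)) •
          heckeT t k (phi K ((Finset.Icc b N).erase j)) =
        (((-1:K))^(j-k-1) * (t-1) * t^((j:ℤ) - N)) • phi K ((Finset.Icc b N).erase j) := by
      intro j hj
      simp only [Finset.mem_Icc] at hj
      have hjm : k ∈ (Finset.Icc b N).erase j :=
        Finset.mem_erase.mpr ⟨by omega, Finset.mem_Icc.mpr ⟨by omega, by omega⟩⟩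
      have hjm1 : k+1 ∈ (Finset.Icc b N).erase j :=
        Finset.mem_erase.mpr ⟨by omega, Finset.mem_Icc.mpr ⟨by omega, by omega⟩⟩
      rw [heckeT_phi_both hjm hjm1, smul_neg, ← neg_smul]
      congr 1
      rw [show j-k-1 = (j-(k+1)-1)+1 from by omega, pow_succ]
      ring
    rw [Finset.sum_congr rfl hterm, he1, he2]
    have hz : t ^ (-(d:ℤ) - 1) = t ^ (-(d:ℤ)) * t⁻¹ := by
      rw [zpow_sub_one₀ ht]
    rw [hz]
    rw [show k+1-k-1 = 0 from by omega, pow_zero]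
    match_scalars <;> field_simp <;> ring

end EigenB
section DExp
variable {K : Type} [Field K]

theorem opD_phi_Icc (t : K) (b N : ℕ) (hb : 1 ≤ b) :
    opD t N (phi K (Finset.Icc b N)) =
      ∑ k ∈ Finset.Icc b N, (t^(k-1) * (-1:K)^(k-b)) • phi K ((Finset.Icc b N).erase k) := by
  rw [opD_phi_expand]
  rw [← Finset.sum_subset (Finset.Icc_subset_Icc_left hb) (fun k _ hk =>
    by rw [fermD_phi_not_mem hk, smul_zero])]
  refine Finset.sum_congr rfl fun k hk => ?_
  simp only [Finset.mem_Icc] at hk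
  rw [fermD_phi_mem (Finset.mem_Icc.mpr hk), smul_smul]
  congr 2
  have : (Finset.Icc b N).filter (· < k) = Finset.Ico b k := by
    ext x; simp only [Finset.mem_filter, Finset.mem_Icc, Finset.mem_Ico]; omega
  rw [this, Nat.card_Ico]

/-- key relation coming from D² = 0 : the alternating sum of D φ_{Icc b N \ {k}} vanishes -/
theorem sum_D_erase (t : K) (b N : ℕ) (hb : 1 ≤ b) (hbN : b ≤ N) :
    ∑ k ∈ Finset.Icc b N, (t^(k-1) * (-1:K)^(k-b)) •
      opD t N (phi K ((Finset.Icc b N).erase k)) = 0 := by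
  have h0 : opD t N (opD t N (phi K (Finset.Icc b N))) = 0 := by
    have := LinearMap.congr_fun (opD_opD t N) (phi K (Finset.Icc b N))
    simpa using this
  rw [opD_phi_Icc t b N hb, map_sum] at h0
  rw [← h0]
  refine Finset.sum_congr rfl fun k _ => ?_
  rw [map_smul]

end DExp

set_option maxHeartbeats 1000000 in
/-- ψ₀ = D φ_{E₀} with E₀ = {N-m, …, N} lies in ker D and is a
simultaneous ω_i-eigenvector: ω_i ψ₀ = t^{c(i)} ψ₀ with c(i) = N-m-i for
1 ≤ i ≤ N-m-1 and c(i) = i-N for N-m ≤ i ≤ N. -/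
theorem psi0_eigenvector (K : Type) [Field K] (t : K) (ht : t ≠ 0) (N m : ℕ)
    (hm : m + 1 ≤ N) :
    opD t N (opD t N (phi K (Finset.Icc (N - m) N))) = 0 ∧
    ∀ i, 1 ≤ i → i ≤ N →
      omega t N i (opD t N (phi K (Finset.Icc (N - m) N))) =
        (t ^ (if i + m < N then (N : ℤ) - m - i else (i : ℤ) - N)) •
          opD t N (phi K (Finset.Icc (N - m) N)) := by
  constructor
  · simpa using LinearMap.congr_fun (opD_opD t N) (phi K (Finset.Icc (N - m) N))
  have key : ∀ d iv, 1 ≤ iv → iv + d = N →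
      omegaAux t d iv (opD t N (phi K (Finset.Icc (N - m) N))) =
        (t ^ (if iv + m < N then (N : ℤ) - m - iv else (iv : ℤ) - N)) •
          opD t N (phi K (Finset.Icc (N - m) N)) := by
    intro d
    induction d with
    | zero =>
      intro iv h1 h2
      have hiv : iv = N := by omega
      subst hiv
      rw [if_neg (by omega), sub_self, zpow_zero, one_smul]
      rfl
    | succ d ih =>
      intro iv h1 h2
      have hiN : iv + 1 ≤ N := by omega
      have hcommT : ∀ x, heckeT t iv (opD t N x) = opD t N (heckeT t iv x) := fun x => by
        simpa using LinearMap.congr_fun (heckeT_opD_comm (i := iv) (N := N) t h1 hiN) x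
      by_cases hc1 : N ≤ iv + m
      · -- (-1)-eigenvector zone : N - m ≤ iv ≤ N - 1
        have hmem1 : iv ∈ Finset.Icc (N-m) N := Finset.mem_Icc.mpr ⟨by omega, by omega⟩
        have hmem2 : iv+1 ∈ Finset.Icc (N-m) N := Finset.mem_Icc.mpr ⟨by omega, by omega⟩
        have hT : heckeT t iv (opD t N (phi K (Finset.Icc (N - m) N))) =
            -(opD t N (phi K (Finset.Icc (N - m) N))) := by
          rw [hcommT, heckeT_phi_both hmem1 hmem2, map_neg]
        have hih := ih (iv+1) (by omega) (by omega)
        rw [if_neg (by omega)] at hih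
        rw [show omegaAux t (d+1) iv =
          t⁻¹ • (heckeT t iv ∘ₗ omegaAux t d (iv+1) ∘ₗ heckeT t iv) from rfl,
          LinearMap.smul_apply, LinearMap.comp_apply, LinearMap.comp_apply, hT,
          map_neg, hih, map_neg, map_smul, hT, if_neg (by omega)]
        simp only [smul_neg, neg_neg, smul_smul, neg_smul]
        congr 1
        rw [show (iv:ℤ) - N = (((iv+1 : ℕ):ℤ) - N) + (-1) from by push_cast; ring,
          zpow_add₀ ht, zpow_neg_one]
        ring
      · by_cases hc2 : iv + 1 + m = N
        · -- the boundary case iv = N - m - 1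
          rw [if_pos (by omega), show (N:ℤ) - m - iv = 1 from by omega, zpow_one]
          have hE : Finset.Icc (N-m) N = (Finset.Icc iv N).erase iv := by
            ext x; simp only [Finset.mem_Icc, Finset.mem_erase]; omega
          have hcommD : ∀ x, omegaAux t (d+1) iv (opD t N x) =
              opD t N (omegaAux t (d+1) iv x) := fun x => by
            simpa using LinearMap.congr_fun
              (omegaAux_opD_comm (N := N) t (d+1) iv h1 (by omega)) x
          rw [hcommD, hE, omegaAux_B t ht iv N (d+1) iv le_rfl (by omega),
            map_add, map_smul, map_sum]
          simp only [map_smul]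
          have hrel := sum_D_erase t iv N h1 (by omega)
          have hins : Finset.Icc iv N = insert iv (Finset.Icc (iv+1) N) := by
            ext x; simp only [Finset.mem_Icc, Finset.mem_insert]; omega
          rw [hins, Finset.sum_insert (by simp [Finset.mem_Icc]),
            Nat.sub_self, pow_zero, mul_one] at hrel
          have hrel2 := eq_neg_of_add_eq_zero_right hrel
          rw [← hins] at hrel2
          have hsum : ∑ j ∈ Finset.Icc (iv+1) N,
              ((-1:K)^(j-iv-1) * (t-1) * t^((j:ℤ) - N)) •
                opD t N (phi K ((Finset.Icc iv N).erase j)) =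
              (-((t-1) * t^((1:ℤ) - (N:ℤ)))) • ∑ j ∈ Finset.Icc (iv+1) N,
                (t^(j-1) * (-1:K)^(j-iv)) •
                  opD t N (phi K ((Finset.Icc iv N).erase j)) := by
            rw [Finset.smul_sum]
            refine Finset.sum_congr rfl fun j hj => ?_
            simp only [Finset.mem_Icc] at hj
            obtain ⟨n, rfl⟩ : ∃ n, j = iv + n + 1 := ⟨j - iv - 1, by omega⟩
            rw [smul_smul]
            congr 1
            rw [show ((iv+n+1 : ℕ):ℤ) - N = (1 - (N:ℤ)) + ((iv+n+1-1 : ℕ):ℤ) from by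
                push_cast; ring,
              zpow_add₀ ht, zpow_natCast,
              show iv+n+1-iv-1 = n from by omega,
              show iv+n+1-iv = n+1 from by omega, pow_succ]
            ring
          rw [hsum, hrel2]
          rw [smul_neg, smul_smul, ← neg_smul, ← add_smul]
          congr 1
          rw [show (iv:ℤ) - N = (1 - (N:ℤ)) + ((iv-1 : ℕ):ℤ) from by
              rw [Nat.cast_sub h1]; push_cast; ring,
            zpow_add₀ ht, zpow_natCast]
          ring
        · -- t-eigenvector zone : iv < N - m - 1
          have hmem1 : iv ∉ Finset.Icc (N-m) N := by
            simp only [Finset.mem_Icc]; omega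
          have hmem2 : iv+1 ∉ Finset.Icc (N-m) N := by
            simp only [Finset.mem_Icc]; omega
          have hT : heckeT t iv (opD t N (phi K (Finset.Icc (N - m) N))) =
              t • (opD t N (phi K (Finset.Icc (N - m) N))) := by
            rw [hcommT, heckeT_phi_none hmem1 hmem2, map_smul]
          have hih := ih (iv+1) (by omega) (by omega)
          rw [if_pos (by omega)] at hih
          rw [show omegaAux t (d+1) iv =
            t⁻¹ • (heckeT t iv ∘ₗ omegaAux t d (iv+1) ∘ₗ heckeT t iv) from rfl,
            LinearMap.smul_apply, LinearMap.comp_apply, LinearMap.comp_apply, hT,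
            map_smul, hih, map_smul, map_smul, hT, if_pos (by omega)]
          rw [smul_smul, smul_smul, smul_smul]
          congr 1
          rw [show (N:ℤ) - m - iv = ((N:ℤ) - m - ((iv+1 : ℕ):ℤ)) + 1 from by push_cast; ring,
            zpow_add₀ ht, zpow_one]
          field_simp
  intro i h1 h2
  exact key (N - i) i h1 (by omega)
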